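/- Let β be a finite type, E : β → β → Prop an edge relation and A : Set β a set of states (those carrying label a). For P : Set β define the monotone operator Φ_P : Set β → Set β by Φ_P Y = {x | ∀ y, E x y → ((y ∈ A ∧ y ∈ P) ∨ y ∈ Y)}, and define the monotone operator Ψ : Set β → Set β by Ψ P = lfp Φ_P. Then for every x : β, x ∈ gfp Ψ if and only if every infinite path p : ℕ → β with p 0 = x and E (p n) (p (n+1)) for all n visits A infinitely often, i.e., for every n there exists m ≥ n with p m ∈ A. -/

import Mathlib

/-- The inner operator `Φ_P Y = {x | ∀ y, E x y → ((y ∈ A ∧ y ∈ P) ∨ y ∈ Y)}`,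
bundled with its monotonicity. -/
def FairPhiHom {β : Type*} (E : β → β → Prop) (A P : Set β) : Set β →o Set β :=
  ⟨fun Y => {x | ∀ y, E x y → ((y ∈ A ∧ y ∈ P) ∨ y ∈ Y)},
   fun _Y _Z hYZ _x hx y hE => (hx y hE).imp id (fun hy => hYZ hy)⟩

/-- The outer operator `Ψ P = lfp Φ_P`, bundled with its monotonicity. -/
def FairPsiHom {β : Type*} (E : β → β → Prop) (A : Set β) : Set β →o Set β :=
  ⟨fun P => OrderHom.lfp (FairPhiHom E A P),
   fun _P _P' hPP' => OrderHom.lfp.monotone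
     (fun _Y _x hx y hE => (hx y hE).imp (fun ⟨hA, hP⟩ => ⟨hA, hPP' hP⟩) id)⟩

theorem gfp_fairPsi_iff_fair {β : Type*} [Fintype β]
    (E : β → β → Prop) (A : Set β) (x : β) :
    x ∈ OrderHom.gfp (FairPsiHom E A) ↔
      ∀ p : ℕ → β, p 0 = x → (∀ n, E (p n) (p (n + 1))) →
        ∀ n, ∃ m ≥ n, p m ∈ A := by
  classical
  constructor
  · intro hx p hp0 hpE n
    set G := OrderHom.gfp (FairPsiHom E A) with hGdef
    have hGl : OrderHom.lfp (FairPhiHom E A G) = G := by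
      have := OrderHom.map_gfp (FairPsiHom E A)
      exact this
    -- S : states from which every infinite path hits A at a position ≥ 1
    set S : Set β :=
      {z | ∀ q : ℕ → β, q 0 = z → (∀ k, E (q k) (q (k+1))) → ∃ m ≥ 1, q m ∈ A} with hS
    have hpre : (FairPhiHom E A G) S ≤ S := by
      intro z hz q hq0 hqE
      have h1 : (q 1 ∈ A ∧ q 1 ∈ G) ∨ q 1 ∈ S := hz (q 1) (hq0 ▸ hqE 0)
      rcases h1 with ⟨hA1, _⟩ | hS1
      · exact ⟨1, le_refl 1, hA1⟩
      · obtain ⟨m, hm, hmA⟩ := hS1 (fun k => q (k+1)) rfl (fun k => hqE (k+1))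
        exact ⟨m + 1, by omega, hmA⟩
    have hGS : G ≤ S := hGl ▸ OrderHom.lfp_le _ hpre
    have hstay : ∀ k, p k ∈ G := by
      intro k
      induction k with
      | zero => rwa [hp0]
      | succ k ih =>
        have ih' : p k ∈ OrderHom.lfp (FairPhiHom E A G) := by rw [hGl]; exact ih
        rw [← OrderHom.map_lfp (FairPhiHom E A G)] at ih'
        rcases ih' (p (k+1)) (hpE k) with ⟨_, hg⟩ | hl
        · exact hg
        · rw [← hGl]; exact hl
    obtain ⟨m, hm, hmA⟩ := hGS (hstay n) (fun k => p (n + k)) rfl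
      (fun k => hpE (n + k))
    exact ⟨n + m, by omega, hmA⟩
  · intro hx
    set T : Set β :=
      {z | ∀ p : ℕ → β, p 0 = z → (∀ k, E (p k) (p (k+1))) →
        ∀ n, ∃ m ≥ n, p m ∈ A} with hT
    -- T is closed under edges
    have hTsucc : ∀ z y, z ∈ T → E z y → y ∈ T := by
      intro z y hz hE p hp0 hpE n
      have hpE' : ∀ k, E ((fun k => Nat.rec z (fun k _ => p k) k) k)
          ((fun k => Nat.rec z (fun k _ => p k) k) (k+1)) := by
        intro k
        cases k with
        | zero => simpa [hp0] using hE
        | succ k => exact hpE k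
      obtain ⟨m, hm, hmA⟩ := hz (fun k => Nat.rec z (fun k _ => p k) k) rfl hpE' (n + 1)
      cases m with
      | zero => omega
      | succ m => exact ⟨m, by omega, hmA⟩
    have key : T ≤ FairPsiHom E A T := by
      intro z hz
      by_contra hzL
      set L := OrderHom.lfp (FairPhiHom E A T) with hL
      have hLfix : (FairPhiHom E A T) L = L := OrderHom.map_lfp _
      -- from a state not in L, pick a bad successor
      have step : ∀ y : β, y ∉ L → ∃ w, E y w ∧ (w ∈ A → w ∉ T) ∧ w ∉ L := by
        intro y hy
        have : y ∉ (FairPhiHom E A T) L := by rwa [hLfix]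
        simp only [FairPhiHom, OrderHom.coe_mk, Set.mem_setOf_eq] at this
        change ¬ ∀ y_1, E y y_1 → (y_1 ∈ A ∧ y_1 ∈ T) ∨ y_1 ∈ L at this
        push_neg at this
        obtain ⟨w, hEw, hw1, hw2⟩ := this
        exact ⟨w, hEw, hw1, hw2⟩
      choose f hfE hfAT hfL using step
      have hzL' : z ∉ L := hzL
      let q : ℕ → {y : β // y ∉ L} :=
        fun n => Nat.rec ⟨z, hzL'⟩ (fun _ y => ⟨f y.1 y.2, hfL y.1 y.2⟩) n
      have hqE : ∀ k, E (q k).1 (q (k+1)).1 := fun k => hfE _ _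
      have hqT : ∀ k, (q k).1 ∈ T := by
        intro k; induction k with
        | zero => exact hz
        | succ k ih => exact hTsucc _ _ ih (hqE k)
      obtain ⟨m, hm, hmA⟩ := hz (fun k => (q k).1) rfl hqE 1
      cases m with
      | zero => omega
      | succ m =>
        have hA' : f (q m).1 (q m).2 ∈ A := hmA
        exact hfAT (q m).1 (q m).2 hA' (hqT (m+1))
    have hsub : T ≤ OrderHom.gfp (FairPsiHom E A) := (FairPsiHom E A).le_gfp key
    exact hsub hx
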